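/- Gap Lemma (Newhouse): if C_1 and C_2 are Cantor sets in ℝ with τ(C_1)·τ(C_2) > 1, C_1 is not contained in a single gap or the unbounded complementary components of C_2, and C_2 is not contained in a single gap or the unbounded complementary components of C_1, then C_1 ∩ C_2 ≠ ∅. -/

import Mathlib

/-- A Cantor set: a nonempty compact perfect totally disconnected subset of ℝ. -/
def IsCantorSet (C : Set ℝ) : Prop :=
  C.Nonempty ∧ IsCompact C ∧ Perfect C ∧ IsTotallyDisconnected C

/-- A gap of a Cantor set `C`: a bounded connected component of the complement of `C`
inside its convex hull, i.e. an open interval with endpoints in `C` and interior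
disjoint from `C`. -/
def IsGap (C U : Set ℝ) : Prop :=
  ∃ p q : ℝ, p < q ∧ p ∈ C ∧ q ∈ C ∧ U = Set.Ioo p q ∧ Set.Ioo p q ∩ C = ∅

/-- A presentation of a Cantor set: an injective enumeration of all its gaps. -/
def IsPresentation (C : Set ℝ) (𝒰 : ℕ → Set ℝ) : Prop :=
  Function.Injective 𝒰 ∧ (∀ n, IsGap C (𝒰 n)) ∧ ∀ U, IsGap C U → ∃ n, U = 𝒰 n

/-- The local thickness τ(C, 𝒰, u) at the boundary point `u` of the gap `𝒰 n`: the ratio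
|K|/|𝒰 n| where `K` is the connected component containing `u` of the convex hull of `C`
minus the first `n+1` gaps. -/
noncomputable def localThickness (C : Set ℝ) (𝒰 : ℕ → Set ℝ) (n : ℕ) (u : ℝ) : ℝ :=
  Metric.diam
    (connectedComponentIn
      (Set.Icc (sInf C) (sSup C) \ ⋃ i ∈ Finset.range (n + 1), 𝒰 i) u) /
    Metric.diam (𝒰 n)

/-- The thickness τ(C): the supremum over presentations 𝒰 of the infimum of the local
thicknesses over all gaps and their boundary points. -/
noncomputable def thickness (C : Set ℝ) : ℝ :=
  sSup {t | ∃ 𝒰 : ℕ → Set ℝ, IsPresentation C 𝒰 ∧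
    t = sInf {s | ∃ n : ℕ, ∃ u ∈ frontier (𝒰 n), s = localThickness C 𝒰 n u}}


open Set

namespace GapAux

lemma gap_overlap {C : Set ℝ} {p q p' q' x : ℝ}
    (h1 : Set.Ioo p q ∩ C = ∅) (h2 : Set.Ioo p' q' ∩ C = ∅)
    (hp : p ∈ C) (hq : q ∈ C) (hp' : p' ∈ C) (hq' : q' ∈ C)
    (hx : x ∈ Set.Ioo p q) (hx' : x ∈ Set.Ioo p' q') : p = p' ∧ q = q' := by
  obtain ⟨hpx, hxq⟩ := hx
  obtain ⟨hpx', hxq'⟩ := hx'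
  constructor
  · rcases lt_trichotomy p p' with h | h | h
    · exact absurd (Set.eq_empty_iff_forall_notMem.1 h1 p' ⟨⟨h, lt_trans hpx' hxq⟩, hp'⟩) not_false
    · exact h
    · exact absurd (Set.eq_empty_iff_forall_notMem.1 h2 p ⟨⟨h, lt_trans hpx hxq'⟩, hp⟩) not_false
  · rcases lt_trichotomy q q' with h | h | h
    · exact absurd (Set.eq_empty_iff_forall_notMem.1 h2 q ⟨⟨lt_trans hpx' hxq, h⟩, hq⟩) not_false
    · exact h
    · exact absurd (Set.eq_empty_iff_forall_notMem.1 h1 q' ⟨⟨lt_trans hpx hxq', h⟩, hq'⟩) not_false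

lemma surround {C : Set ℝ} (hcomp : IsCompact C) {x a b : ℝ}
    (hx : x ∉ C) (ha : a ∈ C) (hb : b ∈ C) (hax : a ≤ x) (hxb : x ≤ b) :
    ∃ p q, p ∈ C ∧ q ∈ C ∧ a ≤ p ∧ p < x ∧ x < q ∧ q ≤ b ∧ Set.Ioo p q ∩ C = ∅ := by
  have hPc : IsCompact (C ∩ Set.Iic x) := hcomp.inter_right isClosed_Iic
  have hQc : IsCompact (C ∩ Set.Ici x) := hcomp.inter_right isClosed_Ici
  have hPne : (C ∩ Set.Iic x).Nonempty := ⟨a, ha, hax⟩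
  have hQne : (C ∩ Set.Ici x).Nonempty := ⟨b, hb, hxb⟩
  set p := sSup (C ∩ Set.Iic x) with hpdef
  set q := sInf (C ∩ Set.Ici x) with hqdef
  have hpmem : p ∈ C ∩ Set.Iic x := hPc.sSup_mem hPne
  have hqmem : q ∈ C ∩ Set.Ici x := hQc.sInf_mem hQne
  have hpx : p < x := lt_of_le_of_ne hpmem.2 (fun h => hx (h ▸ hpmem.1))
  refine ⟨p, q, hpmem.1, hqmem.1, le_csSup hPc.bddAbove ⟨ha, hax⟩, hpx,
    ?_, csInf_le hQc.bddBelow ⟨hb, hxb⟩, ?_⟩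
  · exact lt_of_le_of_ne hqmem.2 (fun h => hx (h.symm ▸ hqmem.1))
  · ext c
    simp only [Set.mem_inter_iff, Set.mem_Ioo, Set.mem_empty_iff_false, iff_false, not_and]
    rintro ⟨hpc, hcq⟩ hc
    rcases le_or_gt c x with h | h
    · exact absurd (le_csSup hPc.bddAbove ⟨hc, h⟩) (not_le.2 hpc)
    · exact absurd (csInf_le hQc.bddBelow ⟨hc, h.le⟩) (not_le.2 hcq)

lemma mem_hull {C : Set ℝ} (hcomp : IsCompact C) (hne : C.Nonempty) {x : ℝ} (hx : x ∈ C) :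
    sInf C ≤ x ∧ x ≤ sSup C :=
  ⟨csInf_le hcomp.bddBelow hx, le_csSup hcomp.bddAbove hx⟩

lemma bridge {C : Set ℝ} (hcomp : IsCompact C) (hne : C.Nonempty)
    {𝒰 : ℕ → Set ℝ} (hP : IsPresentation C 𝒰) {t : ℝ} (ht0 : 0 < t)
    (ht : ∀ (n : ℕ) (u : ℝ), u ∈ frontier (𝒰 n) → t ≤ localThickness C 𝒰 n u)
    {n : ℕ} {p q : ℝ} (hpq : p < q) (hp : p ∈ C) (hq : q ∈ C)
    (hUeq : 𝒰 n = Set.Ioo p q) (hdis : Set.Ioo p q ∩ C = ∅) (u : ℝ) (hu : u = p ∨ u = q) :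
    ∃ a b : ℝ, a ∈ C ∧ b ∈ C ∧ a ≤ u ∧ u ≤ b ∧ t * (q - p) ≤ b - a ∧
      (u = p → b = p) ∧ (u = q → a = q) ∧ ∀ i ≤ n, ∀ x ∈ Set.Icc a b, x ∉ 𝒰 i := by
  set S : Set ℝ := Set.Icc (sInf C) (sSup C) \ ⋃ i ∈ Finset.range (n + 1), 𝒰 i with hSdef
  have hUopen : ∀ i, IsOpen (𝒰 i) := by
    intro i
    obtain ⟨pi, qi, hpqi, hpi, hqi, hUi, hdi⟩ := hP.2.1 i
    rw [hUi]; exact isOpen_Ioo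
  have hSclosed : IsClosed S :=
    IsClosed.sdiff isClosed_Icc (isOpen_biUnion (fun i _ => hUopen i))
  have hCS : ∀ x ∈ C, x ∈ S := by
    intro x hx
    refine ⟨⟨(mem_hull hcomp hne hx).1, (mem_hull hcomp hne hx).2⟩, ?_⟩
    intro hmem
    simp only [Set.mem_iUnion] at hmem
    obtain ⟨i, _, hxi⟩ := hmem
    obtain ⟨pi, qi, hpqi, hpi, hqi, hUi, hdi⟩ := hP.2.1 i
    rw [hUi] at hxi
    exact Set.eq_empty_iff_forall_notMem.1 hdi x ⟨hxi, hx⟩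
  have hu' : u ∈ C := by rcases hu with h | h <;> (subst h; assumption)
  have huS : u ∈ S := hCS u hu'
  set K : Set ℝ := connectedComponentIn S u with hKdef
  have hKsub : K ⊆ S := connectedComponentIn_subset S u
  have huK : u ∈ K := mem_connectedComponentIn huS
  have hKpre : IsPreconnected K := isPreconnected_connectedComponentIn
  have hKbd : Bornology.IsBounded K :=
    Metric.isBounded_Icc (sInf C) (sSup C) |>.subset (fun x hx => (hKsub hx).1)
  have hKclosed : IsClosed K := by
    refine isClosed_of_closure_subset ?_
    exact hKpre.closure.subset_connectedComponentIn (subset_closure huK)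
      (closure_minimal hKsub hSclosed)
  have hKcompact : IsCompact K := Metric.isCompact_of_isClosed_isBounded hKclosed hKbd
  set a : ℝ := sInf K with hadef
  set b : ℝ := sSup K with hbdef
  have ha : a ∈ K := hKcompact.sInf_mem ⟨u, huK⟩
  have hb : b ∈ K := hKcompact.sSup_mem ⟨u, huK⟩
  have hau : a ≤ u := csInf_le hKbd.bddBelow huK
  have hub : u ≤ b := le_csSup hKbd.bddAbove huK
  have hKIcc : K ⊆ Set.Icc a b := fun x hx => ⟨csInf_le hKbd.bddBelow hx, le_csSup hKbd.bddAbove hx⟩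
  have hIccK : Set.Icc a b ⊆ K := (hKpre.ordConnected).out ha hb
  -- the diameter bound
  have hdiam : t * (q - p) ≤ b - a := by
    have h1 := ht n u (by rw [hUeq, frontier_Ioo hpq]; rcases hu with h | h <;> simp [h])
    rw [localThickness, hUeq, Real.diam_Ioo hpq.le] at h1
    have h3 : t ≤ Metric.diam K / (q - p) := h1
    have h2 : Metric.diam K ≤ b - a := by
      calc Metric.diam K ≤ Metric.diam (Set.Icc a b) := Metric.diam_mono hKIcc (Metric.isBounded_Icc a b)
      _ = b - a := Real.diam_Icc (le_trans hau hub)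
    rw [le_div_iff₀ (by linarith : (0:ℝ) < q - p)] at h3
    linarith
  have hnotgap : ∀ x ∈ K, ∀ i ≤ n, x ∉ 𝒰 i := by
    intro x hx i hi hxi
    exact (hKsub hx).2
      (Set.mem_biUnion (Finset.mem_range.2 (Nat.lt_succ_of_le hi)) hxi)
  have hqa : u = q → a = q := by
    intro h
    by_contra hne'
    have haq : a < q := lt_of_le_of_ne (h ▸ hau) hne'
    have h1 : max a p < q := max_lt haq hpq
    set y := (max a p + q) / 2 with hydef
    have hy1 : max a p < y := by rw [hydef]; linarith
    have hy2 : y < q := by rw [hydef]; linarith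
    have hyU : y ∈ 𝒰 n := by
      rw [hUeq]; exact ⟨lt_of_le_of_lt (le_max_right a p) hy1, hy2⟩
    have hyK : y ∈ K := hIccK ⟨le_trans (le_max_left a p) hy1.le,
      le_trans hy2.le (h ▸ hub)⟩
    exact hnotgap y hyK n le_rfl hyU
  have hpb : u = p → b = p := by
    intro h
    by_contra hne'
    have hpb' : p < b := lt_of_le_of_ne (h ▸ hub) (Ne.symm hne')
    have h1 : p < min b q := lt_min hpb' hpq
    set y := (p + min b q) / 2 with hydef
    have hy1 : y < min b q := by rw [hydef]; linarith
    have hy2 : p < y := by rw [hydef]; linarith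
    have hyU : y ∈ 𝒰 n := by
      rw [hUeq]; exact ⟨hy2, lt_of_lt_of_le hy1 (min_le_right b q)⟩
    have hyK : y ∈ K := hIccK ⟨le_trans (h ▸ hau) hy2.le,
      le_trans hy1.le (min_le_left b q)⟩
    exact hnotgap y hyK n le_rfl hyU
  have haS : a ∈ S := hKsub ha
  have hbS : b ∈ S := hKsub hb
  have haC : a ∈ C := by
    by_contra haC
    obtain ⟨α, β, hα, hβ, _, hαa, haβ, _, hgd⟩ :=
      surround hcomp haC (hcomp.sInf_mem hne) (hcomp.sSup_mem hne) haS.1.1 haS.1.2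
    have hsub2 : Set.Icc α a ⊆ S := by
      intro x hx
      refine ⟨⟨le_trans (mem_hull hcomp hne hα).1 hx.1, le_trans hx.2 haS.1.2⟩, ?_⟩
      intro hmem
      simp only [Set.mem_iUnion] at hmem
      obtain ⟨i, hi, hxi⟩ := hmem
      obtain ⟨pi, qi, hpqi, hpi, hqi, hUi, hdi⟩ := hP.2.1 i
      rw [hUi] at hxi
      rcases eq_or_lt_of_le hx.2 with hxa | hxa
      · exact haS.2 (by rw [← hxa]; exact Set.mem_biUnion hi (by rw [hUi]; exact hxi))
      rcases eq_or_lt_of_le hx.1 with hαx | hαx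
      · exact Set.eq_empty_iff_forall_notMem.1 hdi α ⟨hαx ▸ hxi, hα⟩
      · obtain ⟨he1, he2⟩ := gap_overlap hdi hgd hpi hqi hα hβ hxi ⟨hαx, lt_trans hxa haβ⟩
        exact haS.2 (Set.mem_biUnion hi (by rw [hUi, he1, he2]; exact ⟨hαa, haβ⟩))
    have hTpre : IsPreconnected (K ∪ Set.Icc α a) :=
      hKpre.union a ha ⟨hαa.le, le_rfl⟩ isPreconnected_Icc
    have hTK : K ∪ Set.Icc α a ⊆ K :=
      hTpre.subset_connectedComponentIn (Or.inl huK) (Set.union_subset hKsub hsub2)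
    have hαK : α ∈ K := hTK (Or.inr ⟨le_rfl, hαa.le⟩)
    exact absurd (csInf_le hKbd.bddBelow hαK) (not_le.2 hαa)
  have hbC : b ∈ C := by
    by_contra hbC
    obtain ⟨α, β, hα, hβ, _, hαb, hbβ, _, hgd⟩ :=
      surround hcomp hbC (hcomp.sInf_mem hne) (hcomp.sSup_mem hne) hbS.1.1 hbS.1.2
    have hsub2 : Set.Icc b β ⊆ S := by
      intro x hx
      refine ⟨⟨le_trans hbS.1.1 hx.1, le_trans hx.2 (mem_hull hcomp hne hβ).2⟩, ?_⟩
      intro hmem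
      simp only [Set.mem_iUnion] at hmem
      obtain ⟨i, hi, hxi⟩ := hmem
      obtain ⟨pi, qi, hpqi, hpi, hqi, hUi, hdi⟩ := hP.2.1 i
      rw [hUi] at hxi
      rcases eq_or_lt_of_le hx.1 with hbx | hbx
      · exact hbS.2 (by rw [hbx]; exact Set.mem_biUnion hi (by rw [hUi]; exact hxi))
      rcases eq_or_lt_of_le hx.2 with hxβ | hxβ
      · exact Set.eq_empty_iff_forall_notMem.1 hdi β ⟨hxβ ▸ hxi, hβ⟩
      · obtain ⟨he1, he2⟩ := gap_overlap hdi hgd hpi hqi hα hβ hxi ⟨lt_trans hαb hbx, hxβ⟩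
        exact hbS.2 (Set.mem_biUnion hi (by rw [hUi, he1, he2]; exact ⟨hαb, hbβ⟩))
    have hTpre : IsPreconnected (K ∪ Set.Icc b β) :=
      hKpre.union b hb ⟨le_rfl, hbβ.le⟩ isPreconnected_Icc
    have hTK : K ∪ Set.Icc b β ⊆ K :=
      hTpre.subset_connectedComponentIn (Or.inl huK) (Set.union_subset hKsub hsub2)
    have hβK : β ∈ K := hTK (Or.inr ⟨hbβ.le, le_rfl⟩)
    exact absurd (le_csSup hKbd.bddAbove hβK) (not_le.2 hbβ)
  exact ⟨a, b, haC, hbC, hau, hub, hdiam, hpb, hqa,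
    fun i hi x hx => hnotgap x (hIccK hx) i hi⟩

lemma gaps_diam_tendsto {C : Set ℝ} (hcomp : IsCompact C) (hne : C.Nonempty)
    {𝒰 : ℕ → Set ℝ} (hP : IsPresentation C 𝒰) :
    Filter.Tendsto (fun n => Metric.diam (𝒰 n)) Filter.atTop (nhds 0) := by
  rw [← Nat.cofinite_eq_atTop]
  have key : ∀ ε : ℝ, 0 < ε → {n | ε ≤ Metric.diam (𝒰 n)}.Finite := by
    intro ε hε
    by_contra hinf
    replace hinf : {n | ε ≤ Metric.diam (𝒰 n)}.Infinite := hinf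
    obtain ⟨k, hk⟩ := exists_nat_gt ((sSup C - sInf C) / ε)
    obtain ⟨F, hFsub, hFcard⟩ := hinf.exists_subset_card_eq k
    -- each gap is an Ioo with endpoints in C
    have hgap : ∀ n, ∃ p q : ℝ, p < q ∧ p ∈ C ∧ q ∈ C ∧ 𝒰 n = Set.Ioo p q ∧
        Set.Ioo p q ∩ C = ∅ := hP.2.1
    have hdisj : (↑F : Set ℕ).Pairwise (Function.onFun Disjoint 𝒰) := by
      intro m hm n hn hmn
      obtain ⟨p, q, hpq, hp, hq, hUm, hm0⟩ := hgap m
      obtain ⟨p', q', hpq', hp', hq', hUn, hn0⟩ := hgap n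
      rw [Function.onFun, hUm, hUn, Set.disjoint_left]
      intro x hx hx'
      obtain ⟨h1, h2⟩ := gap_overlap hm0 hn0 hp hq hp' hq' hx hx'
      exact hmn (hP.1 (by rw [hUm, hUn, h1, h2]))
    have hmeas : ∀ n ∈ F, MeasurableSet (𝒰 n) := by
      intro n _
      obtain ⟨p, q, hpq, hp, hq, hUn, h0⟩ := hgap n
      rw [hUn]; exact measurableSet_Ioo
    have hvol : ∀ n ∈ F, MeasureTheory.volume (𝒰 n) = ENNReal.ofReal (Metric.diam (𝒰 n)) := by
      intro n _
      obtain ⟨p, q, hpq, hp, hq, hUn, h0⟩ := hgap n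
      rw [hUn, Real.volume_Ioo, Real.diam_Ioo hpq.le]
    have hsub : (⋃ n ∈ F, 𝒰 n) ⊆ Set.Icc (sInf C) (sSup C) := by
      intro x hx
      simp only [Set.mem_iUnion] at hx
      obtain ⟨n, _, hxn⟩ := hx
      obtain ⟨p, q, hpq, hp, hq, hUn, h0⟩ := hgap n
      rw [hUn] at hxn
      exact ⟨le_trans (mem_hull hcomp hne hp).1 hxn.1.le,
        le_trans hxn.2.le (mem_hull hcomp hne hq).2⟩
    have h1 : MeasureTheory.volume (⋃ n ∈ F, 𝒰 n) = ∑ n ∈ F, MeasureTheory.volume (𝒰 n) :=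
      MeasureTheory.measure_biUnion_finset hdisj hmeas
    have h2 : MeasureTheory.volume (⋃ n ∈ F, 𝒰 n) ≤ ENNReal.ofReal (sSup C - sInf C) := by
      calc MeasureTheory.volume (⋃ n ∈ F, 𝒰 n) ≤ MeasureTheory.volume (Set.Icc (sInf C) (sSup C)) :=
        MeasureTheory.measure_mono hsub
      _ = ENNReal.ofReal (sSup C - sInf C) := Real.volume_Icc
    have h3 : (k : ENNReal) * ENNReal.ofReal ε ≤ ∑ n ∈ F, MeasureTheory.volume (𝒰 n) := by
      calc (k : ENNReal) * ENNReal.ofReal ε = ∑ _n ∈ F, ENNReal.ofReal ε := by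
            rw [Finset.sum_const, hFcard, nsmul_eq_mul]
      _ ≤ ∑ n ∈ F, MeasureTheory.volume (𝒰 n) := by
            refine Finset.sum_le_sum (fun n hn => ?_)
            rw [hvol n hn]
            exact ENNReal.ofReal_le_ofReal (hFsub hn)
    have h4 : (k : ENNReal) * ENNReal.ofReal ε ≤ ENNReal.ofReal (sSup C - sInf C) :=
      le_trans h3 (h1 ▸ h2)
    have h5 : ENNReal.ofReal ((k : ℝ) * ε) ≤ ENNReal.ofReal (sSup C - sInf C) := by
      rwa [ENNReal.ofReal_mul (Nat.cast_nonneg k), ENNReal.ofReal_natCast]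
    rcases ENNReal.ofReal_le_ofReal_iff'.1 h5 with h6 | h6
    · have h7 : sSup C - sInf C < (k : ℝ) * ε := by
        have := (div_lt_iff₀ hε).1 hk
        linarith
      linarith
    · obtain ⟨c, hc⟩ := hne
      have h7 := mem_hull hcomp ⟨c, hc⟩ hc
      have h8 : (0:ℝ) ≤ (sSup C - sInf C) / ε := div_nonneg (by linarith [h7.1, h7.2]) hε.le
      have h9 : (0:ℝ) < (k : ℝ) := lt_of_le_of_lt h8 hk
      nlinarith
  rw [Metric.tendsto_nhds]
  intro ε hε
  rw [Filter.eventually_cofinite]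
  refine (key ε hε).subset ?_
  intro n hn
  simp only [Set.mem_setOf_eq, Real.dist_eq, sub_zero, not_lt] at hn
  rw [abs_of_nonneg Metric.diam_nonneg] at hn
  exact hn

structure Link (C D : Set ℝ) (𝒰 𝒱 : ℕ → Set ℝ) : Type where
  n : ℕ
  j : ℕ
  uℓ : ℝ
  uᵣ : ℝ
  vℓ : ℝ
  vᵣ : ℝ
  hUeq : 𝒰 n = Set.Ioo uℓ uᵣ
  hVeq : 𝒱 j = Set.Ioo vℓ vᵣ
  huℓ : uℓ ∈ C
  huᵣ : uᵣ ∈ C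
  hvℓ : vℓ ∈ D
  hvᵣ : vᵣ ∈ D
  hUdis : Set.Ioo uℓ uᵣ ∩ C = ∅
  hVdis : Set.Ioo vℓ vᵣ ∩ D = ∅
  h1 : uℓ < vℓ
  h2 : vℓ < uᵣ
  h3 : uᵣ < vᵣ

lemma step {C D : Set ℝ} {𝒰 𝒱 : ℕ → Set ℝ}
    (hCc : IsCompact C) (hCne : C.Nonempty) (hDc : IsCompact D) (hDne : D.Nonempty)
    (hPU : IsPresentation C 𝒰) (hPV : IsPresentation D 𝒱)
    {t₁ t₂ : ℝ} (ht₁0 : 0 < t₁) (ht₂0 : 0 < t₂) (htt : 1 < t₁ * t₂)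
    (ht₁ : ∀ (n : ℕ) (u : ℝ), u ∈ frontier (𝒰 n) → t₁ ≤ localThickness C 𝒰 n u)
    (ht₂ : ∀ (n : ℕ) (u : ℝ), u ∈ frontier (𝒱 n) → t₂ ≤ localThickness D 𝒱 n u)
    (hdis : ∀ x ∈ C, x ∉ D)
    (L : Link C D 𝒰 𝒱) :
    ∃ L' : Link D C 𝒱 𝒰, (L'.n = L.j ∧ L.n < L'.j) ∨ (L.j < L'.n ∧ L'.j = L.n) := by
  have hUlt : L.uℓ < L.uᵣ := lt_trans L.h1 L.h2
  have hVlt : L.vℓ < L.vᵣ := lt_trans L.h2 L.h3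
  obtain ⟨a, z, haC, hzC, hauᵣ, huᵣz, hdiam₁, _, haeq, hKdis₁⟩ :=
    bridge hCc hCne hPU ht₁0 ht₁ hUlt L.huℓ L.huᵣ L.hUeq L.hUdis L.uᵣ (Or.inr rfl)
  obtain ⟨w, b', hwD, hb'D, hwvℓ, hvℓb', hdiam₂, hbeq, _, hKdis₂⟩ :=
    bridge hDc hDne hPV ht₂0 ht₂ hVlt L.hvℓ L.hvᵣ L.hVeq L.hVdis L.vℓ (Or.inl rfl)
  have ha : a = L.uᵣ := haeq rfl
  have hb : b' = L.vℓ := hbeq rfl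
  rw [ha] at hdiam₁ hKdis₁
  rw [hb] at hdiam₂ hKdis₂
  by_cases hz : L.vᵣ ≤ z
  · -- extend to the right beyond vᵣ : new gap of C containing vᵣ
    have hvᵣC : L.vᵣ ∉ C := fun h => hdis L.vᵣ h L.hvᵣ
    obtain ⟨p', q', hp'C, hq'C, hup', hp'v, hvq', hq'z, hgd⟩ :=
      surround hCc hvᵣC L.huᵣ hzC L.h3.le hz
    have hgap : IsGap C (Set.Ioo p' q') :=
      ⟨p', q', lt_trans hp'v hvq', hp'C, hq'C, rfl, hgd⟩
    obtain ⟨m, hm⟩ := hPU.2.2 _ hgap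
    have hmn : L.n < m := by
      by_contra hle
      push_neg at hle
      have hx0 : (p' + q') / 2 ∈ Set.Ioo p' q' := ⟨by linarith [lt_trans hp'v hvq'],
        by linarith [lt_trans hp'v hvq']⟩
      exact hKdis₁ m hle ((p' + q') / 2) ⟨by linarith [hx0.1], by linarith [hx0.2]⟩ (by rw [← hm]; exact hx0)
    refine ⟨⟨L.j, m, L.vℓ, L.vᵣ, p', q', L.hVeq, hm.symm, L.hvℓ, L.hvᵣ, hp'C, hq'C,
      L.hVdis, hgd, lt_of_lt_of_le L.h2 hup', hp'v, hvq'⟩, Or.inl ⟨rfl, hmn⟩⟩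
  · push_neg at hz
    by_cases hw : w ≤ L.uℓ
    · -- extend to the left beyond uℓ : new gap of D containing uℓ
      have huℓD : L.uℓ ∉ D := fun h => hdis L.uℓ L.huℓ h
      obtain ⟨p'', q'', hp''D, hq''D, hwp'', hp''u, huq'', hq''v, hgd⟩ :=
        surround hDc huℓD hwD L.hvℓ hw L.h1.le
      have hgap : IsGap D (Set.Ioo p'' q'') :=
        ⟨p'', q'', lt_trans hp''u huq'', hp''D, hq''D, rfl, hgd⟩
      obtain ⟨i, hi⟩ := hPV.2.2 _ hgap
      have hij : L.j < i := by
        by_contra hle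
        push_neg at hle
        have hx0 : (p'' + q'') / 2 ∈ Set.Ioo p'' q'' := ⟨by linarith [lt_trans hp''u huq''],
          by linarith [lt_trans hp''u huq'']⟩
        exact hKdis₂ i hle ((p'' + q'') / 2) ⟨by linarith [hx0.1], by linarith [hx0.2]⟩ (by rw [← hi]; exact hx0)
      refine ⟨⟨i, L.n, p'', q'', L.uℓ, L.uᵣ, hi.symm, L.hUeq, hp''D, hq''D, L.huℓ, L.huᵣ,
        hgd, L.hUdis, hp''u, huq'', lt_of_le_of_lt hq''v L.h2⟩, Or.inr ⟨hij, rfl⟩⟩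
    · -- contradiction with thickness
      exfalso
      push_neg at hw
      have e1 : t₁ * (L.uᵣ - L.uℓ) < L.vᵣ - L.vℓ := by
        have : z - L.uᵣ < L.vᵣ - L.vℓ := by linarith [L.h2]
        linarith
      have e2 : t₂ * (L.vᵣ - L.vℓ) < L.uᵣ - L.uℓ := by
        have : L.vℓ - w < L.uᵣ - L.uℓ := by linarith [L.h2]
        linarith
      have hA : (0:ℝ) < L.uᵣ - L.uℓ := by linarith
      have hB : (0:ℝ) < L.vᵣ - L.vℓ := by linarith
      nlinarith [mul_lt_mul'' e1 e2 (by positivity) (by positivity), mul_pos hA hB]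

lemma init {C D : Set ℝ} {𝒰 𝒱 : ℕ → Set ℝ}
    (hCc : IsCompact C) (hCne : C.Nonempty) (hDc : IsCompact D) (hDne : D.Nonempty)
    (hPU : IsPresentation C 𝒰) (hPV : IsPresentation D 𝒱)
    (hdis : ∀ x ∈ C, x ∉ D)
    (hCgap : ¬∃ U, IsGap D U ∧ C ⊆ U)
    (hCleft : ¬C ⊆ Set.Iio (sInf D)) (hCright : ¬C ⊆ Set.Ioi (sSup D))
    (hDgap : ¬∃ U, IsGap C U ∧ D ⊆ U) :
    Nonempty ((Link C D 𝒰 𝒱) ⊕ (Link D C 𝒱 𝒰)) := by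
  have hinfD : sInf D ∈ D := hDc.sInf_mem hDne
  have hsupD : sSup D ∈ D := hDc.sSup_mem hDne
  -- Step 1: find x ∈ C strictly inside the hull of D
  have hx : ∃ x ∈ C, sInf D < x ∧ x < sSup D := by
    obtain ⟨c₁, hc₁C, hc₁⟩ := Set.not_subset.1 hCleft
    obtain ⟨c₂, hc₂C, hc₂⟩ := Set.not_subset.1 hCright
    simp only [Set.mem_Iio, not_lt] at hc₁
    simp only [Set.mem_Ioi, not_lt] at hc₂
    have hc₁' : sInf D < c₁ := lt_of_le_of_ne hc₁ (fun h => hdis c₁ hc₁C (h ▸ hinfD))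
    have hc₂' : c₂ < sSup D := lt_of_le_of_ne hc₂ (fun h => hdis c₂ hc₂C (h.symm ▸ hsupD))
    by_cases h1 : c₁ < sSup D
    · exact ⟨c₁, hc₁C, hc₁', h1⟩
    by_cases h2 : sInf D < c₂
    · exact ⟨c₂, hc₂C, h2, hc₂'⟩
    push_neg at h1 h2
    have hc₂'' : c₂ < sInf D := lt_of_le_of_ne h2 (fun h => hdis c₂ hc₂C (h ▸ hinfD))
    have hinfnC : sInf D ∉ C := fun h => hdis (sInf D) h hinfD
    obtain ⟨g₁, g₂, hg₁C, hg₂C, _, hg₁, hg₂, hg₂le, hgd⟩ :=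
      surround hCc hinfnC hc₂C hc₁C hc₂''.le (le_trans (csInf_le_csSup hDne hDc.bddBelow
        hDc.bddAbove) h1)
    by_cases h3 : sSup D < g₂
    · exact absurd ⟨Set.Ioo g₁ g₂, ⟨g₁, g₂, lt_trans hg₁ hg₂, hg₁C, hg₂C, rfl, hgd⟩,
        fun d hd => ⟨lt_of_lt_of_le hg₁ (csInf_le hDc.bddBelow hd),
          lt_of_le_of_lt (le_csSup hDc.bddAbove hd) h3⟩⟩ hDgap
    push_neg at h3
    exact ⟨g₂, hg₂C, hg₂, lt_of_le_of_ne h3 (fun h => hdis g₂ hg₂C (h ▸ hsupD))⟩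
  obtain ⟨x, hxC, hx1, hx2⟩ := hx
  have hxD : x ∉ D := hdis x hxC
  -- Step 2: the gap of D containing x
  obtain ⟨vℓ, vᵣ, hvℓD, hvᵣD, _, hvℓx, hxvᵣ, _, hVd⟩ :=
    surround hDc hxD hinfD hsupD hx1.le hx2.le
  obtain ⟨j, hj⟩ := hPV.2.2 (Set.Ioo vℓ vᵣ)
    ⟨vℓ, vᵣ, lt_trans hvℓx hxvᵣ, hvℓD, hvᵣD, rfl, hVd⟩
  have hvℓC : vℓ ∉ C := fun h => hdis vℓ h hvℓD
  have hvᵣC : vᵣ ∉ C := fun h => hdis vᵣ h hvᵣD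
  by_cases hc : ∃ c ∈ C, c ≤ vℓ
  · -- gap of C containing vℓ : type A link
    obtain ⟨c, hcC, hcvℓ⟩ := hc
    obtain ⟨uℓ, uᵣ, huℓC, huᵣC, _, huℓ, huᵣ, huᵣx, hUd⟩ :=
      surround hCc hvℓC hcC hxC hcvℓ hvℓx.le
    obtain ⟨n, hn⟩ := hPU.2.2 (Set.Ioo uℓ uᵣ)
      ⟨uℓ, uᵣ, lt_trans huℓ huᵣ, huℓC, huᵣC, rfl, hUd⟩
    exact ⟨Sum.inl ⟨n, j, uℓ, uᵣ, vℓ, vᵣ, hn.symm, hj.symm, huℓC, huᵣC, hvℓD, hvᵣD,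
      hUd, hVd, huℓ, huᵣ, lt_of_le_of_lt huᵣx hxvᵣ⟩⟩
  · push_neg at hc
    by_cases hc' : ∃ c ∈ C, vᵣ ≤ c
    · -- gap of C containing vᵣ : type B link
      obtain ⟨c, hcC, hvᵣc⟩ := hc'
      obtain ⟨uℓ, uᵣ, huℓC, huᵣC, hxuℓ, huℓ, huᵣ, _, hUd⟩ :=
        surround hCc hvᵣC hxC hcC hxvᵣ.le hvᵣc
      obtain ⟨n, hn⟩ := hPU.2.2 (Set.Ioo uℓ uᵣ)
        ⟨uℓ, uᵣ, lt_trans huℓ huᵣ, huℓC, huᵣC, rfl, hUd⟩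
      exact ⟨Sum.inr ⟨j, n, vℓ, vᵣ, uℓ, uᵣ, hj.symm, hn.symm, hvℓD, hvᵣD, huℓC, huᵣC,
        hVd, hUd, lt_of_lt_of_le hvℓx hxuℓ, huℓ, huᵣ⟩⟩
    · push_neg at hc'
      refine absurd ⟨Set.Ioo vℓ vᵣ, ⟨vℓ, vᵣ, lt_trans hvℓx hxvᵣ, hvℓD, hvᵣD, rfl, hVd⟩,
        fun c hcc => ⟨hc c hcc, hc' c hcc⟩⟩ hCgap

lemma thickness_nonneg (C : Set ℝ) : 0 ≤ thickness C := by
  apply Real.sSup_nonneg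
  rintro t ⟨𝒰, hP, rfl⟩
  apply Real.sInf_nonneg
  rintro s ⟨n, u, hu, rfl⟩
  exact div_nonneg Metric.diam_nonneg Metric.diam_nonneg

lemma exists_presentation (C : Set ℝ) {r : ℝ} (hr : 0 ≤ r) (h : r < thickness C) :
    ∃ 𝒰, IsPresentation C 𝒰 ∧ ∃ t : ℝ, r < t ∧
      ∀ (n : ℕ) (u : ℝ), u ∈ frontier (𝒰 n) → t ≤ localThickness C 𝒰 n u := by
  set S := {t | ∃ 𝒰 : ℕ → Set ℝ, IsPresentation C 𝒰 ∧
    t = sInf {s | ∃ n : ℕ, ∃ u ∈ frontier (𝒰 n), s = localThickness C 𝒰 n u}} with hSdef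
  have hSne : S.Nonempty := by
    by_contra hS
    rw [Set.not_nonempty_iff_eq_empty] at hS
    have : thickness C = 0 := by
      rw [thickness, ← hSdef, hS, Real.sSup_empty]
    rw [this] at h
    linarith
  obtain ⟨t, htS, hrt⟩ := exists_lt_of_lt_csSup hSne h
  obtain ⟨𝒰, hP, hteq⟩ := htS
  refine ⟨𝒰, hP, t, hrt, fun n u hu => ?_⟩
  rw [hteq]
  refine csInf_le ⟨0, ?_⟩ ⟨n, u, hu, rfl⟩
  rintro s ⟨m, v, hv, rfl⟩
  exact div_nonneg Metric.diam_nonneg Metric.diam_nonneg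

end GapAux

open GapAux

/-- Newhouse's Gap Lemma: if the thicknesses of two Cantor sets satisfy τ(C₁)·τ(C₂) > 1,
and neither Cantor set is contained in a single gap of the other nor in one of the
unbounded complementary components (the rays beyond the other's convex hull), then the
two Cantor sets intersect. -/
theorem gap_lemma (C₁ C₂ : Set ℝ)
    (h₁ : IsCantorSet C₁) (h₂ : IsCantorSet C₂)
    (hτ : 1 < thickness C₁ * thickness C₂)
    (h₁gap : ¬∃ U, IsGap C₂ U ∧ C₁ ⊆ U)
    (h₁left : ¬C₁ ⊆ Set.Iio (sInf C₂)) (h₁right : ¬C₁ ⊆ Set.Ioi (sSup C₂))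
    (h₂gap : ¬∃ U, IsGap C₁ U ∧ C₂ ⊆ U)
    (h₂left : ¬C₂ ⊆ Set.Iio (sInf C₁)) (h₂right : ¬C₂ ⊆ Set.Ioi (sSup C₁)) :
    (C₁ ∩ C₂).Nonempty := by
  by_contra hemp
  rw [Set.not_nonempty_iff_eq_empty] at hemp
  have hdis : ∀ x ∈ C₁, x ∉ C₂ := fun x hx hx2 =>
    Set.eq_empty_iff_forall_notMem.1 hemp x ⟨hx, hx2⟩
  obtain ⟨hC₁ne, hC₁c, -, -⟩ := h₁
  obtain ⟨hC₂ne, hC₂c, -, -⟩ := h₂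
  set τ₁ := thickness C₁ with hτ₁def
  set τ₂ := thickness C₂ with hτ₂def
  have hτ₁n : 0 ≤ τ₁ := thickness_nonneg C₁
  have hτ₂n : 0 ≤ τ₂ := thickness_nonneg C₂
  have hτ₁0 : 0 < τ₁ := by
    rcases lt_or_eq_of_le hτ₁n with h | h
    · exact h
    · rw [← h] at hτ; simp at hτ; linarith
  have hτ₂0 : 0 < τ₂ := by
    rcases lt_or_eq_of_le hτ₂n with h | h
    · exact h
    · rw [← h] at hτ; simp at hτ; linarith
  set δ := min (min τ₁ τ₂) ((τ₁ * τ₂ - 1) / (τ₁ + τ₂ + 1)) with hδdef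
  have hδ0 : 0 < δ := lt_min (lt_min hτ₁0 hτ₂0) (div_pos (by linarith) (by linarith))
  have hδ1 : δ ≤ τ₁ := le_trans (min_le_left _ _) (min_le_left _ _)
  have hδ2 : δ ≤ τ₂ := le_trans (min_le_left _ _) (min_le_right _ _)
  have hδ3 : δ * (τ₁ + τ₂ + 1) ≤ τ₁ * τ₂ - 1 := by
    have h := min_le_right (min τ₁ τ₂) ((τ₁ * τ₂ - 1) / (τ₁ + τ₂ + 1))
    rw [le_div_iff₀ (by linarith : (0:ℝ) < τ₁ + τ₂ + 1)] at h
    exact h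
  obtain ⟨𝒰, hPU, t₁, ht₁r, ht₁⟩ :=
    exists_presentation C₁ (by linarith : (0:ℝ) ≤ τ₁ - δ) (by linarith)
  obtain ⟨𝒱, hPV, t₂, ht₂r, ht₂⟩ :=
    exists_presentation C₂ (by linarith : (0:ℝ) ≤ τ₂ - δ) (by linarith)
  have ht₁0 : 0 < t₁ := lt_of_le_of_lt (by linarith) ht₁r
  have ht₂0 : 0 < t₂ := lt_of_le_of_lt (by linarith) ht₂r
  have htt : 1 < t₁ * t₂ := by
    have key : (τ₁ - δ) * (τ₂ - δ) ≤ t₁ * t₂ :=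
      mul_le_mul ht₁r.le ht₂r.le (by linarith) ht₁0.le
    nlinarith [sq_nonneg δ]
  obtain ⟨L0⟩ := init hC₁c hC₁ne hC₂c hC₂ne hPU hPV hdis h₁gap h₁left h₁right h₂gap
  set T := (GapAux.Link C₁ C₂ 𝒰 𝒱) ⊕ (GapAux.Link C₂ C₁ 𝒱 𝒰) with hTdef
  set isum : T → ℕ := Sum.elim (fun L => L.n + L.j) (fun L => L.n + L.j) with hisum
  set xpt : T → ℝ := Sum.elim (fun L => L.uᵣ) (fun L => L.vℓ) with hxpt
  set ypt : T → ℝ := Sum.elim (fun L => L.vℓ) (fun L => L.uᵣ) with hypt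
  have stepT : ∀ s : T, ∃ s' : T, isum s < isum s' := by
    rintro (L | L)
    · obtain ⟨L', hL'⟩ := step hC₁c hC₁ne hC₂c hC₂ne hPU hPV ht₁0 ht₂0 htt ht₁ ht₂ hdis L
      refine ⟨Sum.inr L', ?_⟩
      simp only [hisum, Sum.elim_inl, Sum.elim_inr]
      omega
    · obtain ⟨L', hL'⟩ := step hC₂c hC₂ne hC₁c hC₁ne hPV hPU ht₂0 ht₁0
        (mul_comm t₁ t₂ ▸ htt) ht₂ ht₁ (fun x hx hx2 => hdis x hx2 hx) L
      refine ⟨Sum.inl L', ?_⟩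
      simp only [hisum, Sum.elim_inl, Sum.elim_inr]
      omega
  have hmemx : ∀ s : T, xpt s ∈ C₁ := by
    rintro (L | L)
    · exact L.huᵣ
    · exact L.hvℓ
  have hmemy : ∀ s : T, ypt s ∈ C₂ := by
    rintro (L | L)
    · exact L.hvℓ
    · exact L.huᵣ
  have hbound : ∀ s : T, ∀ ε : ℝ, ∀ N : ℕ,
      (∀ m, N ≤ m → Metric.diam (𝒰 m) < ε ∧ Metric.diam (𝒱 m) < ε) →
      2 * N ≤ isum s → |xpt s - ypt s| < ε := by
    rintro (L | L) ε N hN hs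
    · simp only [hisum, Sum.elim_inl, hxpt, hypt] at hs ⊢
      have hd1 : L.uᵣ - L.uℓ = Metric.diam (𝒰 L.n) := by
        rw [L.hUeq, Real.diam_Ioo (lt_trans L.h1 L.h2).le]
      have hd2 : L.vᵣ - L.vℓ = Metric.diam (𝒱 L.j) := by
        rw [L.hVeq, Real.diam_Ioo (lt_trans L.h2 L.h3).le]
      rw [abs_of_pos (by linarith [L.h2] : (0:ℝ) < L.uᵣ - L.vℓ)]
      rcases (by omega : N ≤ L.n ∨ N ≤ L.j) with h | h
      · have := (hN L.n h).1
        rw [← hd1] at this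
        linarith [L.h1]
      · have := (hN L.j h).2
        rw [← hd2] at this
        linarith [L.h3]
    · simp only [hisum, Sum.elim_inr, hxpt, hypt] at hs ⊢
      have hd1 : L.uᵣ - L.uℓ = Metric.diam (𝒱 L.n) := by
        rw [L.hUeq, Real.diam_Ioo (lt_trans L.h1 L.h2).le]
      have hd2 : L.vᵣ - L.vℓ = Metric.diam (𝒰 L.j) := by
        rw [L.hVeq, Real.diam_Ioo (lt_trans L.h2 L.h3).le]
      rw [abs_sub_comm, abs_of_pos (by linarith [L.h2] : (0:ℝ) < L.uᵣ - L.vℓ)]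
      rcases (by omega : N ≤ L.n ∨ N ≤ L.j) with h | h
      · have := (hN L.n h).2
        rw [← hd1] at this
        linarith [L.h1]
      · have := (hN L.j h).1
        rw [← hd2] at this
        linarith [L.h3]
  set f : T → T := fun s => Classical.choose (stepT s) with hfdef
  have hf : ∀ s, isum s < isum (f s) := fun s => Classical.choose_spec (stepT s)
  set seq : ℕ → T := fun k => f^[k] L0 with hseqdef
  have hseqsucc : ∀ k, seq (k + 1) = f (seq k) := by
    intro k
    simp only [hseqdef]
    exact Function.iterate_succ_apply' f k L0
  have hmono : ∀ k, k ≤ isum (seq k) := by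
    intro k
    induction k with
    | zero => exact Nat.zero_le _
    | succ k ih =>
      have h1 := hf (seq k)
      rw [← hseqsucc k] at h1
      omega
  have htend : Filter.Tendsto (fun k => xpt (seq k) - ypt (seq k)) Filter.atTop (nhds 0) := by
    rw [Metric.tendsto_atTop]
    intro ε hε
    obtain ⟨N₁, hN₁⟩ := Metric.tendsto_atTop.1 (gaps_diam_tendsto hC₁c hC₁ne hPU) ε hε
    obtain ⟨N₂, hN₂⟩ := Metric.tendsto_atTop.1 (gaps_diam_tendsto hC₂c hC₂ne hPV) ε hε
    refine ⟨2 * (N₁ + N₂), fun k hk => ?_⟩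
    rw [Real.dist_eq, sub_zero]
    refine hbound (seq k) ε (N₁ + N₂) (fun m hm => ⟨?_, ?_⟩) (le_trans hk (hmono k))
    · have := hN₁ m (le_trans (Nat.le_add_right N₁ N₂) hm)
      rwa [Real.dist_eq, sub_zero, abs_of_nonneg Metric.diam_nonneg] at this
    · have := hN₂ m (le_trans (Nat.le_add_left N₂ N₁) hm)
      rwa [Real.dist_eq, sub_zero, abs_of_nonneg Metric.diam_nonneg] at this
  obtain ⟨x, hxC₁, φ, hφ, hφtend⟩ := hC₁c.tendsto_subseq (fun k => hmemx (seq k))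
  have hsub : Filter.Tendsto (fun k => xpt (seq (φ k)) - ypt (seq (φ k)))
      Filter.atTop (nhds 0) := htend.comp hφ.tendsto_atTop
  have h2tend : Filter.Tendsto (fun k => ypt (seq (φ k))) Filter.atTop (nhds x) := by
    have h3 := hφtend.sub hsub
    simp only [Function.comp] at h3 ⊢
    simpa using h3
  have hxC₂ : x ∈ C₂ := hC₂c.isClosed.mem_of_tendsto h2tend
    (Filter.Eventually.of_forall (fun k => hmemy _))
  exact hdis x hxC₁ hxC₂
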